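/- Under the same hypotheses (|pᵢ − q·αᵢ| ≤ ε for i = 2,…,k−1 with q ≤ 2^{(k−2)(k−1)/4}·ε^{−(k−2)}, d = (a_k−a₁)/q, o = a₁), the square norm satisfies N^{(2)}_{d,o}(A) ≤ 2^{(k−1)/4}·√(k−2), where N^{(2)}_{d,o}(A) = (√(Σ_{i=1}^{k} |aᵢ − o − dℤ|²))/d · ((a_k−a₁)/d)^{1/(k−2)}. -/

import Mathlib

/-- Theorem 2.2 (square norm): under the same hypotheses,
`N⁽²⁾_{d,o}(A) ≤ 2^{(k-1)/4} √(k-2)`. -/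
theorem lll_square_norm_bound (k : ℕ) (hk : 3 ≤ k) (a : Fin k → ℝ) (hmono : StrictMono a)
    (p : Fin k → ℤ) (q : ℕ) (hq : 1 ≤ q) (ε : ℝ) (hε0 : 0 < ε) (hε1 : ε < 1)
    (happ : ∀ i : Fin k, 0 < (i : ℕ) → (i : ℕ) < k - 1 →
      |(p i : ℝ) - (q : ℝ) *
        ((a i - a ⟨0, by omega⟩) / (a ⟨k - 1, by omega⟩ - a ⟨0, by omega⟩))| ≤ ε)
    (hqb : (q : ℝ) ≤ 2 ^ (((k : ℝ) - 2) * ((k : ℝ) - 1) / 4) * ε ^ (-((k : ℝ) - 2)))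
    (d o : ℝ) (hd : d = (a ⟨k - 1, by omega⟩ - a ⟨0, by omega⟩) / (q : ℝ))
    (ho : o = a ⟨0, by omega⟩) :
    Real.sqrt (∑ i, (⨅ m : ℤ, |a i - o - (m : ℝ) * d|) ^ 2) / d *
      ((a ⟨k - 1, by omega⟩ - a ⟨0, by omega⟩) / d) ^ ((1 : ℝ) / ((k : ℝ) - 2))
      ≤ 2 ^ (((k : ℝ) - 1) / 4) * Real.sqrt ((k : ℝ) - 2) := by
  set i0 : Fin k := ⟨0, by omega⟩
  set il : Fin k := ⟨k - 1, by omega⟩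
  set Δ : ℝ := a il - a i0 with hΔ
  have hΔpos : 0 < Δ := sub_pos.mpr (hmono (show i0 < il by simp [i0, il, Fin.lt_def]; omega))
  have hqpos : (0 : ℝ) < q := by exact_mod_cast hq
  have hdpos : 0 < d := by rw [hd]; positivity
  set D : Fin k → ℝ := fun i => ⨅ m : ℤ, |a i - o - (m : ℝ) * d| with hD
  have hbdd : ∀ i : Fin k, BddBelow (Set.range fun m : ℤ => |a i - o - (m : ℝ) * d|) :=
    fun i => ⟨0, by rintro x ⟨m, rfl⟩; exact abs_nonneg _⟩
  have hDnonneg : ∀ i, 0 ≤ D i := fun i => le_ciInf fun m => abs_nonneg _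
  have hDle : ∀ i (m : ℤ), D i ≤ |a i - o - (m : ℝ) * d| := fun i m => ciInf_le (hbdd i) m
  -- boundary terms vanish
  have hD0 : D i0 = 0 := by
    refine le_antisymm ?_ (hDnonneg i0)
    have := hDle i0 0
    simpa [ho] using this
  have hDl : D il = 0 := by
    refine le_antisymm ?_ (hDnonneg il)
    have hval : |a il - o - (((q : ℤ)) : ℝ) * d| = 0 := by
      rw [abs_eq_zero, ho, hd]; push_cast; field_simp; linarith [hΔ]
    exact (hDle il (q : ℤ)).trans_eq hval
  -- middle terms
  have hmid : ∀ i : Fin k, i ≠ i0 → i ≠ il → D i ≤ d * ε := by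
    intro i h1 h2
    have hi1 : 0 < (i : ℕ) := by
      rcases Nat.eq_zero_or_pos (i : ℕ) with h | h
      · exact absurd (Fin.ext h) h1
      · exact h
    have hi2 : (i : ℕ) < k - 1 := by
      rcases lt_or_eq_of_le (Nat.le_sub_one_of_lt i.isLt) with h | h
      · exact h
      · exact absurd (Fin.ext h) h2
    have happ' := happ i hi1 hi2
    have hval : a i - o - ((p i : ℤ) : ℝ) * d = d * ((q : ℝ) * ((a i - a i0) / Δ) - p i) := by
      rw [ho, hd]
      field_simp
    calc D i ≤ |a i - o - ((p i : ℤ) : ℝ) * d| := hDle i (p i)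
      _ = d * |(p i : ℝ) - (q : ℝ) * ((a i - a i0) / Δ)| := by
          rw [hval, abs_mul, abs_of_pos hdpos, ← abs_neg]; ring_nf
      _ ≤ d * ε := by
          have := mul_le_mul_of_nonneg_left happ' hdpos.le
          simpa [i0, il, Δ] using this
  -- sum bound
  set S : ℝ := ∑ i, (D i) ^ 2 with hS
  have hne : i0 ≠ il := by simp [i0, il, Fin.ext_iff]; omega
  have hsum : S ≤ ((k : ℝ) - 2) * (d * ε) ^ 2 := by
    have hmem : il ∈ Finset.univ.erase i0 := Finset.mem_erase.mpr ⟨hne.symm, Finset.mem_univ _⟩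
    have e1 : S = ∑ i ∈ (Finset.univ.erase i0).erase il, (D i) ^ 2 := by
      rw [Finset.sum_erase _ (by simp [hDl]), Finset.sum_erase _ (by simp [hD0])]
    have hcard : ((Finset.univ.erase i0).erase il).card = k - 2 := by
      rw [Finset.card_erase_of_mem hmem, Finset.card_erase_of_mem (Finset.mem_univ _)]
      simp only [Finset.card_univ, Fintype.card_fin]
      omega
    have e2 : ∑ i ∈ (Finset.univ.erase i0).erase il, (D i) ^ 2
        ≤ ((Finset.univ.erase i0).erase il).card • ((d * ε) ^ 2) := by
      apply Finset.sum_le_card_nsmul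
      intro i hi
      have h2 := (Finset.mem_erase.mp hi).1
      have h1 := (Finset.mem_erase.mp (Finset.mem_erase.mp hi).2).1
      have := hmid i h1 h2
      exact pow_le_pow_left₀ (hDnonneg i) this 2
    rw [e1]
    refine e2.trans ?_
    rw [hcard, nsmul_eq_mul]
    have : ((k - 2 : ℕ) : ℝ) = (k : ℝ) - 2 := by
      push_cast [Nat.cast_sub (by omega : 2 ≤ k)]; ring
    rw [this]
  have hk2 : (0 : ℝ) < (k : ℝ) - 2 := by
    have : (3 : ℝ) ≤ (k : ℝ) := by exact_mod_cast hk
    linarith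
  have hsqrt : Real.sqrt S ≤ Real.sqrt ((k : ℝ) - 2) * (d * ε) := by
    refine (Real.sqrt_le_sqrt hsum).trans ?_
    rw [Real.sqrt_mul hk2.le, Real.sqrt_sq (by positivity)]
  -- ratio Δ / d = q
  have hratio : Δ / d = (q : ℝ) := by
    rw [hd]; field_simp
  -- rpow bound
  have hqe : (q : ℝ) ^ ((1 : ℝ) / ((k : ℝ) - 2))
      ≤ 2 ^ (((k : ℝ) - 1) / 4) * ε⁻¹ := by
    have h1 : (q : ℝ) ^ ((1 : ℝ) / ((k : ℝ) - 2))
        ≤ (2 ^ (((k : ℝ) - 2) * ((k : ℝ) - 1) / 4) * ε ^ (-((k : ℝ) - 2)))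
          ^ ((1 : ℝ) / ((k : ℝ) - 2)) :=
      Real.rpow_le_rpow (by positivity) hqb (by positivity)
    refine h1.trans_eq ?_
    rw [Real.mul_rpow (by positivity) (by positivity),
      ← Real.rpow_mul (by norm_num : (0:ℝ) ≤ 2), ← Real.rpow_mul hε0.le]
    have e1 : ((k : ℝ) - 2) * ((k : ℝ) - 1) / 4 * (1 / ((k : ℝ) - 2))
        = ((k : ℝ) - 1) / 4 := by
      field_simp
    have e2 : -((k : ℝ) - 2) * (1 / ((k : ℝ) - 2)) = -1 := by
      field_simp
    rw [e1, e2, Real.rpow_neg_one]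
  -- finish
  have hgoal : Real.sqrt S / d * ((q : ℝ)) ^ ((1 : ℝ) / ((k : ℝ) - 2))
      ≤ 2 ^ (((k : ℝ) - 1) / 4) * Real.sqrt ((k : ℝ) - 2) := by
    calc Real.sqrt S / d * ((q : ℝ)) ^ ((1 : ℝ) / ((k : ℝ) - 2))
        ≤ (Real.sqrt ((k : ℝ) - 2) * (d * ε)) / d * ((q : ℝ)) ^ ((1 : ℝ) / ((k : ℝ) - 2)) := by
          gcongr
      _ = Real.sqrt ((k : ℝ) - 2) * ε * ((q : ℝ)) ^ ((1 : ℝ) / ((k : ℝ) - 2)) := by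
          field_simp
      _ ≤ Real.sqrt ((k : ℝ) - 2) * ε * (2 ^ (((k : ℝ) - 1) / 4) * ε⁻¹) :=
          mul_le_mul_of_nonneg_left hqe (by positivity)
      _ = 2 ^ (((k : ℝ) - 1) / 4) * Real.sqrt ((k : ℝ) - 2) * (ε * ε⁻¹) := by ring
      _ = 2 ^ (((k : ℝ) - 1) / 4) * Real.sqrt ((k : ℝ) - 2) := by
          rw [mul_inv_cancel₀ hε0.ne', mul_one]
  simpa [hratio] using hgoal
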